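/- For each m ∈ {0,…,4}, let N(T_m) be the centralizer of T_m in G. Then the quotient group N(T_m)/⟨T_m⟩ of N(T_m) by the cyclic subgroup generated by T_m is isomorphic to the quaternion group of order 8. -/

import Mathlib

open Matrix Complex

noncomputable def T : Fin 5 → Matrix (Fin 4) (Fin 4) ℂ :=
  ![!![1,0,0,0; 0,-1,0,0; 0,0,1,0; 0,0,0,-1],
    !![0,I,0,0; -I,0,0,0; 0,0,0,-I; 0,0,I,0],
    !![0,1,0,0; 1,0,0,0; 0,0,0,1; 0,0,1,0],
    !![0,0,0,1; 0,0,-1,0; 0,-1,0,0; 1,0,0,0],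
    !![0,0,0,I; 0,0,-I,0; 0,I,0,0; -I,0,0,0]]

/-- The subgroup of `GL(4,ℂ)` generated by `T 0, …, T 4`. -/
noncomputable def Ggrp : Subgroup ((Matrix (Fin 4) (Fin 4) ℂ)ˣ) :=
  Subgroup.closure {g | ∃ m : Fin 5, (g : Matrix (Fin 4) (Fin 4) ℂ) = T m}

/-- The underlying matrix of an element of `G`. -/
noncomputable def mat (v : Ggrp) : Matrix (Fin 4) (Fin 4) ℂ :=
  ((v : (Matrix (Fin 4) (Fin 4) ℂ)ˣ) : Matrix (Fin 4) (Fin 4) ℂ)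

structure Mono where
  p : Fin 4 → Fin 4
  c : Fin 4 → ZMod 4

lemma funext4 {α : Type} {f g : Fin 4 → α} (h0 : f 0 = g 0) (h1 : f 1 = g 1)
    (h2 : f 2 = g 2) (h3 : f 3 = g 3) : f = g := by
  funext i
  fin_cases i
  · exact h0
  · exact h1
  · exact h2
  · exact h3

instance : DecidableEq Mono := fun A B =>
  decidable_of_iff (A.p 0 = B.p 0 ∧ A.p 1 = B.p 1 ∧ A.p 2 = B.p 2 ∧ A.p 3 = B.p 3 ∧
      A.c 0 = B.c 0 ∧ A.c 1 = B.c 1 ∧ A.c 2 = B.c 2 ∧ A.c 3 = B.c 3)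
    ⟨fun ⟨a1,a2,a3,a4,b1,b2,b3,b4⟩ => by
      cases A; cases B
      simp only [Mono.mk.injEq]
      exact ⟨funext4 a1 a2 a3 a4, funext4 b1 b2 b3 b4⟩,
     fun h => by subst h; exact ⟨rfl, rfl, rfl, rfl, rfl, rfl, rfl, rfl⟩⟩

def mulP (A B : Mono) : Mono := ⟨fun i => B.p (A.p i), fun i => A.c i + B.c (A.p i)⟩

noncomputable def toC (A : Mono) : Matrix (Fin 4) (Fin 4) ℂ :=
  Matrix.of fun i j => if j = A.p i then I ^ (A.c i).val else 0

lemma I_pow_mod4 (n : ℕ) : (I:ℂ) ^ (n % 4) = I ^ n := by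
  conv_rhs => rw [← Nat.div_add_mod n 4]
  rw [pow_add, pow_mul, I_pow_four, one_pow, one_mul]

lemma Ipow_add (x y : ZMod 4) : (I:ℂ) ^ (x + y).val = I ^ x.val * I ^ y.val := by
  rw [ZMod.val_add, I_pow_mod4, pow_add]

lemma Ipow_inj {x y : ZMod 4} (h : (I:ℂ) ^ x.val = I ^ y.val) : x = y := by
  apply ZMod.val_injective
  have hx : x.val < 4 := ZMod.val_lt x
  have hy : y.val < 4 := ZMod.val_lt y
  revert h
  generalize x.val = a at *
  generalize y.val = b at *
  interval_cases a <;> interval_cases b <;>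
    simp_all [pow_succ, Complex.ext_iff] <;> norm_num

lemma toC_mul (A B : Mono) : toC (mulP A B) = toC A * toC B := by
  ext i j
  rw [Matrix.mul_apply, Finset.sum_eq_single (A.p i)
    (fun k _ hk => by
      have h0 : toC A i k = 0 := by simp [toC, hk]
      rw [h0, zero_mul])
    (fun h => absurd (Finset.mem_univ _) h)]
  simp only [toC, Matrix.of_apply, mulP]
  by_cases h : j = B.p (A.p i)
  · subst h
    simp [Ipow_add]
  · simp [h]

lemma toC_inj : Function.Injective toC := by
  intro A B h
  have h' : ∀ i j, toC A i j = toC B i j := fun i j => by rw [h]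
  have hp : ∀ i, A.p i = B.p i := by
    intro i
    by_contra hne
    have e1 : toC A i (A.p i) = I ^ (A.c i).val := by simp [toC]
    have e2 : toC B i (A.p i) = 0 := by simp [toC, hne]
    exact absurd (e1 ▸ e2 ▸ h' i (A.p i)) (pow_ne_zero _ I_ne_zero)
  have hc : ∀ i, A.c i = B.c i := by
    intro i
    have e1 : toC A i (A.p i) = I ^ (A.c i).val := by simp [toC]
    have e2 : toC B i (A.p i) = I ^ (B.c i).val := by simp [toC, hp i]
    exact Ipow_inj (e1 ▸ e2 ▸ h' i (A.p i))
  cases A; cases B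
  simp only [Mono.mk.injEq]
  exact ⟨funext hp, funext hc⟩

def idP : Mono := ⟨![0,1,2,3], ![0,0,0,0]⟩

lemma zv0 : (0 : ZMod 4).val = 0 := by decide
lemma zv1 : (1 : ZMod 4).val = 1 := by decide
lemma zv2 : (2 : ZMod 4).val = 2 := by decide
lemma zv3 : (3 : ZMod 4).val = 3 := by decide

lemma toC_id : toC idP = 1 := by
  ext i j
  fin_cases i <;> fin_cases j <;>
    simp (config := { decide := true }) [toC, idP, Matrix.one_apply, Matrix.vecHead, Matrix.vecTail, zv0]

def tP : Fin 5 → Mono :=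
  ![⟨![0,1,2,3], ![0,2,0,2]⟩,
    ⟨![1,0,3,2], ![1,3,3,1]⟩,
    ⟨![1,0,3,2], ![0,0,0,0]⟩,
    ⟨![3,2,1,0], ![0,2,2,0]⟩,
    ⟨![3,2,1,0], ![1,3,1,3]⟩]

lemma map_T : ∀ m, T m = toC (tP m) := by
  intro m
  fin_cases m <;>
  · ext i j
    fin_cases i <;> fin_cases j <;>
      simp (config := { decide := true }) [T, tP, toC, Matrix.vecHead, Matrix.vecTail, zv0, zv1, zv2, zv3, pow_succ, Complex.I_mul_I]

def L32 : List Mono := [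
  ⟨![0,1,2,3], ![0,0,0,0]⟩,
  ⟨![0,1,2,3], ![0,2,0,2]⟩,
  ⟨![1,0,3,2], ![1,3,3,1]⟩,
  ⟨![1,0,3,2], ![0,0,0,0]⟩,
  ⟨![3,2,1,0], ![0,2,2,0]⟩,
  ⟨![3,2,1,0], ![1,3,1,3]⟩,
  ⟨![1,0,3,2], ![1,1,3,3]⟩,
  ⟨![1,0,3,2], ![0,2,0,2]⟩,
  ⟨![3,2,1,0], ![0,0,2,2]⟩,
  ⟨![3,2,1,0], ![1,1,1,1]⟩,
  ⟨![1,0,3,2], ![3,3,1,1]⟩,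
  ⟨![0,1,2,3], ![1,3,3,1]⟩,
  ⟨![2,3,0,1], ![3,3,3,3]⟩,
  ⟨![2,3,0,1], ![0,0,2,2]⟩,
  ⟨![1,0,3,2], ![2,0,2,0]⟩,
  ⟨![0,1,2,3], ![3,1,1,3]⟩,
  ⟨![2,3,0,1], ![2,0,0,2]⟩,
  ⟨![2,3,0,1], ![3,1,3,1]⟩,
  ⟨![3,2,1,0], ![2,2,0,0]⟩,
  ⟨![2,3,0,1], ![1,1,1,1]⟩,
  ⟨![2,3,0,1], ![0,2,2,0]⟩,
  ⟨![0,1,2,3], ![3,3,1,1]⟩,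
  ⟨![3,2,1,0], ![3,3,3,3]⟩,
  ⟨![2,3,0,1], ![2,2,0,0]⟩,
  ⟨![2,3,0,1], ![1,3,1,3]⟩,
  ⟨![0,1,2,3], ![1,1,3,3]⟩,
  ⟨![1,0,3,2], ![3,1,1,3]⟩,
  ⟨![1,0,3,2], ![2,2,2,2]⟩,
  ⟨![3,2,1,0], ![2,0,0,2]⟩,
  ⟨![3,2,1,0], ![3,1,3,1]⟩,
  ⟨![0,1,2,3], ![2,0,2,0]⟩,
  ⟨![0,1,2,3], ![2,2,2,2]⟩]

lemma tP_sq (m : Fin 5) : mulP (tP m) (tP m) = idP := by fin_cases m <;> decide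

lemma T_mul_self (m : Fin 5) : T m * T m = 1 := by
  rw [map_T m, ← toC_mul, tP_sq, toC_id]

noncomputable def gU (m : Fin 5) : (Matrix (Fin 4) (Fin 4) ℂ)ˣ :=
  ⟨T m, T m, T_mul_self m, T_mul_self m⟩

noncomputable def gG (m : Fin 5) : Ggrp :=
  ⟨gU m, Subgroup.subset_closure ⟨m, rfl⟩⟩

lemma mat_mul (v w : Ggrp) : mat (v * w) = mat v * mat w := rfl

lemma mat_injective : Function.Injective mat :=
  fun _ _ h => Subtype.ext (Units.ext h)

lemma L32_closed : ∀ A ∈ L32, ∀ B ∈ L32, mulP A B ∈ L32 := by decide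

lemma L32_pow4 : ∀ A ∈ L32, mulP A (mulP A (mulP A A)) = idP := by decide

lemma tP_mem : ∀ m : Fin 5, tP m ∈ L32 := by decide

lemma idP_mem : idP ∈ L32 := by decide

lemma G_sub (v : Ggrp) : ∃ A ∈ L32, mat v = toC A := by
  obtain ⟨v, hv⟩ := v
  show ∃ A ∈ L32, (↑v : Matrix (Fin 4) (Fin 4) ℂ) = toC A
  induction hv using Subgroup.closure_induction with
  | mem g hg =>
    obtain ⟨m, hm⟩ := hg
    exact ⟨tP m, tP_mem m, hm.trans (map_T m)⟩
  | one => exact ⟨idP, idP_mem, by rw [Units.val_one, toC_id]⟩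
  | mul g h _ _ hg hh =>
    obtain ⟨A, hA, eA⟩ := hg
    obtain ⟨B, hB, eB⟩ := hh
    exact ⟨mulP A B, L32_closed A hA B hB, by rw [Units.val_mul, eA, eB, toC_mul]⟩
  | inv g _ hg =>
    obtain ⟨A, hA, eA⟩ := hg
    refine ⟨mulP A (mulP A A), L32_closed A hA _ (L32_closed A hA A hA), ?_⟩
    have h1 : (↑g : Matrix (Fin 4) (Fin 4) ℂ) * toC (mulP A (mulP A A)) = 1 := by
      rw [eA, ← toC_mul, L32_pow4 A hA, toC_id]
    exact Units.inv_eq_of_mul_eq_one_right h1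

noncomputable def rep (v : Ggrp) : Mono := (G_sub v).choose

lemma rep_mem (v : Ggrp) : rep v ∈ L32 := (G_sub v).choose_spec.1

lemma rep_val (v : Ggrp) : mat v = toC (rep v) := (G_sub v).choose_spec.2

lemma rep_eq {v : Ggrp} {A : Mono} (h : mat v = toC A) : rep v = A :=
  toC_inj (by rw [← rep_val, h])

def Fq (tbl : List (Mono × QuaternionGroup 2)) (A : Mono) : QuaternionGroup 2 :=
  ((tbl.find? fun p => decide (p.1 = A)).map Prod.snd).getD 1

def wprod (w : List (Fin 5)) : Mono := w.foldl (fun A m => mulP A (tP m)) idP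

lemma wprod_lift : ∀ (w : List (Fin 5)) (A : Mono), (∃ v : Ggrp, mat v = toC A) →
    ∃ v : Ggrp, mat v = toC (w.foldl (fun A m => mulP A (tP m)) A) := by
  intro w
  induction w with
  | nil => exact fun A h => h
  | cons m w ih =>
    intro A ⟨v, hv⟩
    exact ih (mulP A (tP m)) ⟨v * gG m, by
      rw [mat_mul, hv, toC_mul]
      congr 1
      exact map_T m⟩

lemma wprod_mem (w : List (Fin 5)) : ∃ v : Ggrp, mat v = toC (wprod w) :=
  wprod_lift w idP ⟨1, by rw [toC_id]; rfl⟩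

lemma master (u : Ggrp) (tm : Mono) (tbl : List (Mono × QuaternionGroup 2))
    (hu : mat u = toC tm)
    (hcl : ∀ A ∈ L32, (mulP A tm = mulP tm A ↔ A ∈ tbl.map Prod.fst))
    (hhom : ∀ A ∈ tbl.map Prod.fst, ∀ B ∈ tbl.map Prod.fst,
      Fq tbl (mulP A B) = Fq tbl A * Fq tbl B)
    (hker : ∀ A ∈ tbl.map Prod.fst, Fq tbl A = 1 → A = idP ∨ A = tm)
    (hFtm : Fq tbl tm = 1)
    (hsurj : ∀ q : QuaternionGroup 2, ∃ w : List (Fin 5),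
      mulP (wprod w) tm = mulP tm (wprod w) ∧ Fq tbl (wprod w) = q) :
    ∃ f : (Subgroup.centralizer ({u} : Set Ggrp)) →* QuaternionGroup 2,
      Function.Surjective f ∧
      f.ker = (Subgroup.zpowers u).subgroupOf (Subgroup.centralizer ({u} : Set Ggrp)) := by
  have hcomm : ∀ c : Subgroup.centralizer ({u} : Set Ggrp), u * (c : Ggrp) = (c : Ggrp) * u :=
    fun c => Subgroup.mem_centralizer_iff.mp c.2 u rfl
  have hrepc : ∀ c : Subgroup.centralizer ({u} : Set Ggrp),
      rep (c : Ggrp) ∈ tbl.map Prod.fst := by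
    intro c
    refine (hcl _ (rep_mem _)).mp (toC_inj ?_)
    rw [toC_mul, toC_mul, ← rep_val, ← hu, ← mat_mul, ← mat_mul, hcomm c]
  have hmul : ∀ c d : Subgroup.centralizer ({u} : Set Ggrp),
      rep ((c : Ggrp) * (d : Ggrp)) = mulP (rep (c : Ggrp)) (rep (d : Ggrp)) :=
    fun c d => rep_eq (by rw [mat_mul, toC_mul, ← rep_val, ← rep_val])
  have hmulhom : ∀ c d : Subgroup.centralizer ({u} : Set Ggrp),
      (fun c : Subgroup.centralizer ({u} : Set Ggrp) => Fq tbl (rep (c : Ggrp))) (c * d) =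
      (fun c : Subgroup.centralizer ({u} : Set Ggrp) => Fq tbl (rep (c : Ggrp))) c *
      (fun c : Subgroup.centralizer ({u} : Set Ggrp) => Fq tbl (rep (c : Ggrp))) d := by
    intro c d
    show Fq tbl (rep ((c : Ggrp) * (d : Ggrp))) = _
    rw [hmul c d]
    exact hhom _ (hrepc c) _ (hrepc d)
  refine ⟨MonoidHom.mk' (fun c => Fq tbl (rep (c : Ggrp))) hmulhom, ?_, ?_⟩
  · intro q
    obtain ⟨w, hw1, hw2⟩ := hsurj q
    obtain ⟨v, hv⟩ := wprod_mem w
    have hvc : v ∈ Subgroup.centralizer ({u} : Set Ggrp) := by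
      rw [Subgroup.mem_centralizer_iff]
      rintro h' rfl
      apply mat_injective
      rw [mat_mul, mat_mul, hu, hv, ← toC_mul, ← toC_mul, hw1]
    refine ⟨⟨v, hvc⟩, ?_⟩
    show Fq tbl (rep v) = q
    rw [rep_eq hv, hw2]
  · have humem : u ∈ Subgroup.centralizer ({u} : Set Ggrp) := by
      rw [Subgroup.mem_centralizer_iff]
      rintro h' rfl
      rfl
    ext c
    rw [MonoidHom.mem_ker, Subgroup.mem_subgroupOf]
    constructor
    · intro hc
      replace hc : Fq tbl (rep (c : Ggrp)) = 1 := hc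
      rcases hker _ (hrepc c) hc with h | h
      · have : (c : Ggrp) = 1 := mat_injective (by
          rw [rep_val (c : Ggrp), h, toC_id]; rfl)
        rw [this]
        exact Subgroup.one_mem _
      · have : (c : Ggrp) = u := mat_injective (by rw [rep_val (c : Ggrp), h, hu])
        rw [this]
        exact Subgroup.mem_zpowers u
    · intro hc
      obtain ⟨n, hn⟩ := Subgroup.mem_zpowers_iff.mp hc
      have hcn : c = (⟨u, humem⟩ : Subgroup.centralizer ({u} : Set Ggrp)) ^ n := by
        apply Subtype.ext
        rw [SubgroupClass.coe_zpow]
        exact hn.symm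
      have hone : Fq tbl (rep (((⟨u, humem⟩ : Subgroup.centralizer ({u} : Set Ggrp)) : Ggrp))) = 1 := by
        rw [show ((⟨u, humem⟩ : Subgroup.centralizer ({u} : Set Ggrp)) : Ggrp) = u from rfl,
          rep_eq hu]
        exact hFtm
      rw [hcn, map_zpow,
        show (MonoidHom.mk' (fun c : Subgroup.centralizer ({u} : Set Ggrp) =>
          Fq tbl (rep (c : Ggrp))) hmulhom) (⟨u, humem⟩ : Subgroup.centralizer ({u} : Set Ggrp)) = 1
          from hone,
        _root_.one_zpow]

def tbl0 : List (Mono × QuaternionGroup 2) := [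
  (⟨![0,1,2,3], ![0,0,0,0]⟩, QuaternionGroup.a 0),
  (⟨![0,1,2,3], ![0,2,0,2]⟩, QuaternionGroup.a 0),
  (⟨![0,1,2,3], ![1,3,3,1]⟩, QuaternionGroup.a 3),
  (⟨![2,3,0,1], ![3,3,3,3]⟩, QuaternionGroup.xa 1),
  (⟨![2,3,0,1], ![0,0,2,2]⟩, QuaternionGroup.xa 2),
  (⟨![0,1,2,3], ![3,1,1,3]⟩, QuaternionGroup.a 1),
  (⟨![2,3,0,1], ![2,0,0,2]⟩, QuaternionGroup.xa 0),
  (⟨![2,3,0,1], ![3,1,3,1]⟩, QuaternionGroup.xa 1),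
  (⟨![2,3,0,1], ![1,1,1,1]⟩, QuaternionGroup.xa 3),
  (⟨![2,3,0,1], ![0,2,2,0]⟩, QuaternionGroup.xa 2),
  (⟨![0,1,2,3], ![3,3,1,1]⟩, QuaternionGroup.a 1),
  (⟨![2,3,0,1], ![2,2,0,0]⟩, QuaternionGroup.xa 0),
  (⟨![2,3,0,1], ![1,3,1,3]⟩, QuaternionGroup.xa 3),
  (⟨![0,1,2,3], ![1,1,3,3]⟩, QuaternionGroup.a 3),
  (⟨![0,1,2,3], ![2,0,2,0]⟩, QuaternionGroup.a 2),
  (⟨![0,1,2,3], ![2,2,2,2]⟩, QuaternionGroup.a 2)]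

def tbl1 : List (Mono × QuaternionGroup 2) := [
  (⟨![0,1,2,3], ![0,0,0,0]⟩, QuaternionGroup.a 0),
  (⟨![1,0,3,2], ![1,3,3,1]⟩, QuaternionGroup.a 0),
  (⟨![1,0,3,2], ![0,2,0,2]⟩, QuaternionGroup.a 1),
  (⟨![3,2,1,0], ![0,0,2,2]⟩, QuaternionGroup.xa 3),
  (⟨![3,2,1,0], ![1,1,1,1]⟩, QuaternionGroup.xa 0),
  (⟨![1,0,3,2], ![2,0,2,0]⟩, QuaternionGroup.a 3),
  (⟨![2,3,0,1], ![2,0,0,2]⟩, QuaternionGroup.xa 0),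
  (⟨![2,3,0,1], ![3,1,3,1]⟩, QuaternionGroup.xa 1),
  (⟨![3,2,1,0], ![2,2,0,0]⟩, QuaternionGroup.xa 1),
  (⟨![2,3,0,1], ![0,2,2,0]⟩, QuaternionGroup.xa 2),
  (⟨![0,1,2,3], ![3,3,1,1]⟩, QuaternionGroup.a 1),
  (⟨![3,2,1,0], ![3,3,3,3]⟩, QuaternionGroup.xa 2),
  (⟨![2,3,0,1], ![1,3,1,3]⟩, QuaternionGroup.xa 3),
  (⟨![0,1,2,3], ![1,1,3,3]⟩, QuaternionGroup.a 3),
  (⟨![1,0,3,2], ![3,1,1,3]⟩, QuaternionGroup.a 2),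
  (⟨![0,1,2,3], ![2,2,2,2]⟩, QuaternionGroup.a 2)]

def tbl2 : List (Mono × QuaternionGroup 2) := [
  (⟨![0,1,2,3], ![0,0,0,0]⟩, QuaternionGroup.a 0),
  (⟨![1,0,3,2], ![0,0,0,0]⟩, QuaternionGroup.a 0),
  (⟨![1,0,3,2], ![1,1,3,3]⟩, QuaternionGroup.a 3),
  (⟨![3,2,1,0], ![0,0,2,2]⟩, QuaternionGroup.xa 2),
  (⟨![3,2,1,0], ![1,1,1,1]⟩, QuaternionGroup.xa 3),
  (⟨![1,0,3,2], ![3,3,1,1]⟩, QuaternionGroup.a 1),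
  (⟨![2,3,0,1], ![3,3,3,3]⟩, QuaternionGroup.xa 1),
  (⟨![2,3,0,1], ![0,0,2,2]⟩, QuaternionGroup.xa 2),
  (⟨![3,2,1,0], ![2,2,0,0]⟩, QuaternionGroup.xa 0),
  (⟨![2,3,0,1], ![1,1,1,1]⟩, QuaternionGroup.xa 3),
  (⟨![0,1,2,3], ![3,3,1,1]⟩, QuaternionGroup.a 1),
  (⟨![3,2,1,0], ![3,3,3,3]⟩, QuaternionGroup.xa 1),
  (⟨![2,3,0,1], ![2,2,0,0]⟩, QuaternionGroup.xa 0),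
  (⟨![0,1,2,3], ![1,1,3,3]⟩, QuaternionGroup.a 3),
  (⟨![1,0,3,2], ![2,2,2,2]⟩, QuaternionGroup.a 2),
  (⟨![0,1,2,3], ![2,2,2,2]⟩, QuaternionGroup.a 2)]

def tbl3 : List (Mono × QuaternionGroup 2) := [
  (⟨![0,1,2,3], ![0,0,0,0]⟩, QuaternionGroup.a 0),
  (⟨![3,2,1,0], ![0,2,2,0]⟩, QuaternionGroup.a 0),
  (⟨![1,0,3,2], ![1,1,3,3]⟩, QuaternionGroup.xa 3),
  (⟨![1,0,3,2], ![0,2,0,2]⟩, QuaternionGroup.xa 2),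
  (⟨![3,2,1,0], ![1,1,1,1]⟩, QuaternionGroup.a 3),
  (⟨![1,0,3,2], ![3,3,1,1]⟩, QuaternionGroup.xa 1),
  (⟨![0,1,2,3], ![1,3,3,1]⟩, QuaternionGroup.a 3),
  (⟨![2,3,0,1], ![0,0,2,2]⟩, QuaternionGroup.xa 0),
  (⟨![1,0,3,2], ![2,0,2,0]⟩, QuaternionGroup.xa 0),
  (⟨![0,1,2,3], ![3,1,1,3]⟩, QuaternionGroup.a 1),
  (⟨![2,3,0,1], ![3,1,3,1]⟩, QuaternionGroup.xa 3),
  (⟨![3,2,1,0], ![3,3,3,3]⟩, QuaternionGroup.a 1),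
  (⟨![2,3,0,1], ![2,2,0,0]⟩, QuaternionGroup.xa 2),
  (⟨![2,3,0,1], ![1,3,1,3]⟩, QuaternionGroup.xa 1),
  (⟨![3,2,1,0], ![2,0,0,2]⟩, QuaternionGroup.a 2),
  (⟨![0,1,2,3], ![2,2,2,2]⟩, QuaternionGroup.a 2)]

def tbl4 : List (Mono × QuaternionGroup 2) := [
  (⟨![0,1,2,3], ![0,0,0,0]⟩, QuaternionGroup.a 0),
  (⟨![3,2,1,0], ![1,3,1,3]⟩, QuaternionGroup.a 0),
  (⟨![1,0,3,2], ![1,1,3,3]⟩, QuaternionGroup.xa 3),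
  (⟨![1,0,3,2], ![0,2,0,2]⟩, QuaternionGroup.xa 2),
  (⟨![3,2,1,0], ![0,0,2,2]⟩, QuaternionGroup.a 1),
  (⟨![1,0,3,2], ![3,3,1,1]⟩, QuaternionGroup.xa 1),
  (⟨![0,1,2,3], ![1,3,3,1]⟩, QuaternionGroup.a 3),
  (⟨![2,3,0,1], ![3,3,3,3]⟩, QuaternionGroup.xa 2),
  (⟨![1,0,3,2], ![2,0,2,0]⟩, QuaternionGroup.xa 0),
  (⟨![0,1,2,3], ![3,1,1,3]⟩, QuaternionGroup.a 1),
  (⟨![2,3,0,1], ![2,0,0,2]⟩, QuaternionGroup.xa 1),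
  (⟨![3,2,1,0], ![2,2,0,0]⟩, QuaternionGroup.a 3),
  (⟨![2,3,0,1], ![1,1,1,1]⟩, QuaternionGroup.xa 0),
  (⟨![2,3,0,1], ![0,2,2,0]⟩, QuaternionGroup.xa 3),
  (⟨![3,2,1,0], ![3,1,3,1]⟩, QuaternionGroup.a 2),
  (⟨![0,1,2,3], ![2,2,2,2]⟩, QuaternionGroup.a 2)]

/-- For each reflection `T m` (realized as an element `u` of `G`), the quotient of the
centralizer `N(T m)` of `T m` in `G` by the cyclic subgroup generated by `T m` is
isomorphic to the quaternion group `Q₈` (expressed via a surjective homomorphism onto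
`QuaternionGroup 2` whose kernel is `⟨T m⟩`). -/
theorem stmt6 (m : Fin 5) (u : Ggrp) (hu : mat u = T m) :
    ∃ f : (Subgroup.centralizer ({u} : Set Ggrp)) →* QuaternionGroup 2,
      Function.Surjective f ∧
      f.ker = (Subgroup.zpowers u).subgroupOf (Subgroup.centralizer ({u} : Set Ggrp)) := by
  fin_cases m
  · refine master u ⟨![0,1,2,3], ![0,2,0,2]⟩ tbl0 (hu.trans (map_T 0)) (by decide) (by decide) (by decide) (by decide) ?_
    intro q
    rcases q with j | j
    · fin_cases j
      · exact ⟨[], by decide⟩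
      · exact ⟨[2,1], by decide⟩
      · exact ⟨[1,0,1], by decide⟩
      · exact ⟨[1,2], by decide⟩
    · fin_cases j
      · exact ⟨[2,3], by decide⟩
      · exact ⟨[1,3], by decide⟩
      · exact ⟨[1,4], by decide⟩
      · exact ⟨[3,1], by decide⟩
  · refine master u ⟨![1,0,3,2], ![1,3,3,1]⟩ tbl1 (hu.trans (map_T 1)) (by decide) (by decide) (by decide) (by decide) ?_
    intro q
    rcases q with j | j
    · fin_cases j
      · exact ⟨[], by decide⟩
      · exact ⟨[0,2], by decide⟩
      · exact ⟨[0,1,0], by decide⟩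
      · exact ⟨[2,0], by decide⟩
    · fin_cases j
      · exact ⟨[0,4], by decide⟩
      · exact ⟨[2,4], by decide⟩
      · exact ⟨[3,2], by decide⟩
      · exact ⟨[0,3], by decide⟩
  · refine master u ⟨![1,0,3,2], ![0,0,0,0]⟩ tbl2 (hu.trans (map_T 2)) (by decide) (by decide) (by decide) (by decide) ?_
    intro q
    rcases q with j | j
    · fin_cases j
      · exact ⟨[], by decide⟩
      · exact ⟨[1,0], by decide⟩
      · exact ⟨[0,2,0], by decide⟩
      · exact ⟨[0,1], by decide⟩
    · fin_cases j
      · exact ⟨[3,0], by decide⟩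
      · exact ⟨[1,3], by decide⟩
      · exact ⟨[0,3], by decide⟩
      · exact ⟨[0,4], by decide⟩
  · refine master u ⟨![3,2,1,0], ![0,2,2,0]⟩ tbl3 (hu.trans (map_T 3)) (by decide) (by decide) (by decide) (by decide) ?_
    intro q
    rcases q with j | j
    · fin_cases j
      · exact ⟨[], by decide⟩
      · exact ⟨[2,1], by decide⟩
      · exact ⟨[0,3,0], by decide⟩
      · exact ⟨[0,4], by decide⟩
    · fin_cases j
      · exact ⟨[1,4], by decide⟩
      · exact ⟨[1,0], by decide⟩
      · exact ⟨[0,2], by decide⟩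
      · exact ⟨[0,1], by decide⟩
  · refine master u ⟨![3,2,1,0], ![1,3,1,3]⟩ tbl4 (hu.trans (map_T 4)) (by decide) (by decide) (by decide) (by decide) ?_
    intro q
    rcases q with j | j
    · fin_cases j
      · exact ⟨[], by decide⟩
      · exact ⟨[0,3], by decide⟩
      · exact ⟨[0,4,0], by decide⟩
      · exact ⟨[1,2], by decide⟩
    · fin_cases j
      · exact ⟨[2,0], by decide⟩
      · exact ⟨[1,0], by decide⟩
      · exact ⟨[0,2], by decide⟩
      · exact ⟨[0,1], by decide⟩
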